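/- Let α₁, α₂, β₁, β₂, δ, γ be positive real numbers. There exist rank-one orthogonal projections P₁, Q₁, R on ℂ² (with its standard inner product) such that the family {P₁, Q₁, R} is irreducible and α₁·P₁ + α₂·I + β₁·Q₁ + β₂·I + δ·R = γ·I, if and only if α₁ + α₂ + β₂ < γ, α₂ + β₁ + β₂ < γ, α₂ + β₂ + δ < γ, and α₁ + 2α₂ + β₁ + 2β₂ + δ = 2γ. (This describes all weights with which the unique indecomposable representation of the primitive poset (2,2,1) with dimension vector (1,2;1,2;1;2) can be unitarized; here the second members P₂, Q₂ of the two chains have rank 2, i.e., P₂ = Q₂ = I.) -/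

import Mathlib

noncomputable section

/-- An orthogonal projection on `ℂⁿ` (with its standard inner product): a symmetric
idempotent linear operator. -/
def IsOrthProj {n : ℕ}
    (p : EuclideanSpace ℂ (Fin n) →ₗ[ℂ] EuclideanSpace ℂ (Fin n)) : Prop :=
  p.IsSymmetric ∧ p ∘ₗ p = p

/-- For orthogonal projections, `p ≤ q` means `pq = qp = p`. -/
def ProjLE {n : ℕ}
    (p q : EuclideanSpace ℂ (Fin n) →ₗ[ℂ] EuclideanSpace ℂ (Fin n)) : Prop :=
  q ∘ₗ p = p ∧ p ∘ₗ q = p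

/-- A family of operators on `ℂⁿ` is irreducible if the only subspaces invariant under
every member of the family are `{0}` and `ℂⁿ`. -/
def IrreducibleFamily {n : ℕ}
    (T : Set (EuclideanSpace ℂ (Fin n) →ₗ[ℂ] EuclideanSpace ℂ (Fin n))) : Prop :=
  ∀ W : Submodule ℂ (EuclideanSpace ℂ (Fin n)),
    (∀ f ∈ T, W.map f ≤ W) → W = ⊥ ∨ W = ⊤

open scoped InnerProductSpace ComplexConjugate

namespace Unitarization221

abbrev E2 := EuclideanSpace ℂ (Fin 2)

def vec2 (x y : ℂ) : E2 := WithLp.toLp 2 ![x, y]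

@[simp] lemma vec2_zero (x y : ℂ) : vec2 x y 0 = x := rfl
@[simp] lemma vec2_one (x y : ℂ) : vec2 x y 1 = y := rfl

lemma inner_vec2 (x y : ℂ) (v : E2) : ⟪vec2 x y, v⟫_ℂ = conj x * v 0 + conj y * v 1 := by
  simp [PiLp.inner_apply, Fin.sum_univ_two, RCLike.inner_apply, vec2]; ring

def rk1 (u : E2) : E2 →ₗ[ℂ] E2 where
  toFun v := ⟪u, v⟫_ℂ • u
  map_add' x y := by simp [inner_add_right, add_smul]
  map_smul' c x := by simp [inner_smul_right, smul_smul]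

@[simp] lemma rk1_apply (u v : E2) : rk1 u v = ⟪u, v⟫_ℂ • u := rfl

lemma rk1_symm (u : E2) : (rk1 u).IsSymmetric := by
  intro x y
  simp only [rk1_apply, inner_smul_left, inner_smul_right]
  rw [← inner_conj_symm x u]; ring

lemma rk1_idem (u : E2) (h : ⟪u, u⟫_ℂ = 1) : rk1 u ∘ₗ rk1 u = rk1 u := by
  apply LinearMap.ext; intro v
  simp only [LinearMap.comp_apply, rk1_apply, inner_smul_right, h, mul_one, smul_smul]

lemma rk1_range (u : E2) (h : ⟪u, u⟫_ℂ = 1) : LinearMap.range (rk1 u) = ℂ ∙ u := by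
  apply le_antisymm
  · rintro - ⟨v, rfl⟩
    exact Submodule.smul_mem _ _ (Submodule.mem_span_singleton_self u)
  · rw [Submodule.span_singleton_le_iff_mem]
    exact ⟨u, by rw [rk1_apply, h, one_smul]⟩

lemma rk1_finrank (u : E2) (h : ⟪u, u⟫_ℂ = 1) :
    Module.finrank ℂ (LinearMap.range (rk1 u)) = 1 := by
  have hu : u ≠ 0 := by
    intro h0; rw [h0] at h; simp at h
  rw [rk1_range u h, finrank_span_singleton hu]

lemma key_lt (P Q R : E2 →ₗ[ℂ] E2) (hP : IsOrthProj P) (hQ : IsOrthProj Q)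
    (hR : IsOrthProj R) (hrP : Module.finrank ℂ (LinearMap.range P) = 1)
    (hirr : IrreducibleFamily {P, Q, R}) (a b d c : ℝ)
    (hb : 0 < b) (hd : 0 < d)
    (heq : (a : ℂ) • P + (b : ℂ) • Q + (d : ℂ) • R = (c : ℂ) • LinearMap.id) :
    a < c := by
  by_contra hlt
  push_neg at hlt   -- c ≤ a
  have hne : LinearMap.range P ≠ ⊥ := by
    intro h; rw [h] at hrP; simp at hrP
  obtain ⟨v, hv, hv0⟩ := Submodule.exists_mem_ne_zero_of_ne_bot hne
  have hPv : P v = v := by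
    obtain ⟨u, rfl⟩ := hv
    have := congrFun (congrArg DFunLike.coe hP.2) u
    simpa using this
  have hiq : ⟪v, Q v⟫_ℂ = (‖Q v‖ ^ 2 : ℝ) := by
    have h1 : Q (Q v) = Q v := by
      have := congrFun (congrArg DFunLike.coe hQ.2) v
      simpa using this
    calc ⟪v, Q v⟫_ℂ = ⟪v, Q (Q v)⟫_ℂ := by rw [h1]
    _ = ⟪Q v, Q v⟫_ℂ := (hQ.1 v (Q v)).symm
    _ = (‖Q v‖ ^ 2 : ℝ) := by rw [inner_self_eq_norm_sq_to_K]; norm_num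
  have hir : ⟪v, R v⟫_ℂ = (‖R v‖ ^ 2 : ℝ) := by
    have h1 : R (R v) = R v := by
      have := congrFun (congrArg DFunLike.coe hR.2) v
      simpa using this
    calc ⟪v, R v⟫_ℂ = ⟪v, R (R v)⟫_ℂ := by rw [h1]
    _ = ⟪R v, R v⟫_ℂ := (hR.1 v (R v)).symm
    _ = (‖R v‖ ^ 2 : ℝ) := by rw [inner_self_eq_norm_sq_to_K]; norm_num
  have hvv : ⟪v, v⟫_ℂ = (‖v‖ ^ 2 : ℝ) := by rw [inner_self_eq_norm_sq_to_K]; norm_num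
  have happ := congrFun (congrArg DFunLike.coe heq) v
  simp only [LinearMap.add_apply, LinearMap.smul_apply, LinearMap.id_apply] at happ
  have hinner : (a : ℂ) * (‖v‖^2 : ℝ) + (b : ℂ) * (‖Q v‖^2 : ℝ) + (d : ℂ) * (‖R v‖^2 : ℝ)
      = (c : ℂ) * (‖v‖^2 : ℝ) := by
    have h2 := congrArg (fun w => ⟪v, w⟫_ℂ) happ
    simp only [inner_add_right, inner_smul_right, hPv, hiq, hir, hvv] at h2
    exact h2
  have hinnerR : a * ‖v‖^2 + b * ‖Q v‖^2 + d * ‖R v‖^2 = c * ‖v‖^2 := by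
    exact_mod_cast hinner
  have hnv : 0 < ‖v‖^2 := by
    have : ‖v‖ ≠ 0 := norm_ne_zero_iff.mpr hv0
    positivity
  have hca : c * ‖v‖^2 ≤ a * ‖v‖^2 := mul_le_mul_of_nonneg_right hlt (sq_nonneg _)
  have hQn : (0:ℝ) ≤ b * ‖Q v‖^2 := by positivity
  have hRn : (0:ℝ) ≤ d * ‖R v‖^2 := by positivity
  have hQ0 : Q v = 0 := by
    have h3 : b * ‖Q v‖^2 = 0 := by linarith
    have h4 : ‖Q v‖^2 = 0 := by
      rcases mul_eq_zero.mp h3 with h | h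
      · exact absurd h (ne_of_gt hb)
      · exact h
    exact norm_eq_zero.mp (by nlinarith [norm_nonneg (Q v), norm_nonneg (R v)])
  have hR0 : R v = 0 := by
    have h3 : d * ‖R v‖^2 = 0 := by linarith
    have h4 : ‖R v‖^2 = 0 := by
      rcases mul_eq_zero.mp h3 with h | h
      · exact absurd h (ne_of_gt hd)
      · exact h
    exact norm_eq_zero.mp (by nlinarith [norm_nonneg (Q v), norm_nonneg (R v)])
  have hinv : ∀ f ∈ ({P, Q, R} : Set (E2 →ₗ[ℂ] E2)), (ℂ ∙ v).map f ≤ ℂ ∙ v := by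
    intro f hf
    simp only [Set.mem_insert_iff, Set.mem_singleton_iff] at hf
    rw [Submodule.map_span, Set.image_singleton, Submodule.span_singleton_le_iff_mem]
    rcases hf with rfl | rfl | rfl
    · rw [hPv]; exact Submodule.mem_span_singleton_self v
    · rw [hQ0]; exact Submodule.zero_mem _
    · rw [hR0]; exact Submodule.zero_mem _
  rcases hirr _ hinv with h | h
  · exact hv0 (by simpa [Submodule.span_singleton_eq_bot] using h)
  · have h1 : Module.finrank ℂ (ℂ ∙ v : Submodule ℂ E2) = 1 := finrank_span_singleton hv0
    rw [h, finrank_top] at h1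
    have : Module.finrank ℂ E2 = 2 := finrank_euclideanSpace_fin
    omega

lemma exists_pqxy (a b d c : ℝ) (ha : 0 < a) (hb : 0 < b) (hd : 0 < d)
    (hac : a < c) (hbc : b < c) (hdc : d < c) (hsum : a + b + d = 2*c) :
    ∃ p q x y : ℝ, 0 < p ∧ 0 < q ∧ p^2 + q^2 = 1 ∧ x^2 + y^2 = 1 ∧
      a + b*p^2 + d*x^2 = c ∧ b*(p*q) + d*(x*y) = 0 ∧ b*q^2 + d*y^2 = c := by
  have hc : 0 < c := lt_trans ha hac
  set s1 := Real.sqrt (c-a) with hs1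
  set s2 := Real.sqrt (c-b) with hs2
  set s3 := Real.sqrt (c-d) with hs3
  set sa := Real.sqrt a with hsa
  set sb := Real.sqrt b with hsb
  set sd := Real.sqrt d with hsd
  set sc := Real.sqrt c with hsc
  have h1 : s1^2 = c - a := Real.sq_sqrt (by linarith)
  have h2 : s2^2 = c - b := Real.sq_sqrt (by linarith)
  have h3 : s3^2 = c - d := Real.sq_sqrt (by linarith)
  have hA : sa^2 = a := Real.sq_sqrt ha.le
  have hB : sb^2 = b := Real.sq_sqrt hb.le
  have hD : sd^2 = d := Real.sq_sqrt hd.le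
  have hC : sc^2 = c := Real.sq_sqrt hc.le
  have p1 : 0 < s1 := Real.sqrt_pos.mpr (by linarith)
  have p2 : 0 < s2 := Real.sqrt_pos.mpr (by linarith)
  have p3 : 0 < s3 := Real.sqrt_pos.mpr (by linarith)
  have pa : 0 < sa := Real.sqrt_pos.mpr ha
  have pb : 0 < sb := Real.sqrt_pos.mpr hb
  have pd : 0 < sd := Real.sqrt_pos.mpr hd
  have pc : 0 < sc := Real.sqrt_pos.mpr hc
  have hd2 : d = 2*c - a - b := by linarith
  have hne : (2*c - a - b) ≠ 0 := by intro h; rw [hd2] at hd; linarith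
  have hab : (sa*sb)*(sa*sb) = a*b := by
    rw [show (sa*sb)*(sa*sb) = sa^2*sb^2 by ring, hA, hB]
  have had : (sa*sd)*(sa*sd) = a*d := by
    rw [show (sa*sd)*(sa*sd) = sa^2*sd^2 by ring, hA, hD]
  refine ⟨s1*s2/(sa*sb), sc*s3/(sa*sb), -(s1*s3/(sa*sd)), sc*s2/(sa*sd),
    by positivity, by positivity, ?_, ?_, ?_, ?_, ?_⟩
  · simp only [neg_sq, div_pow, mul_pow]
    rw [h1, h2, hC, h3, hA, hB, hd2]
    field_simp
    ring
  · simp only [neg_sq, div_pow, mul_pow]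
    rw [h1, h3, hC, h2, hA, hD, hd2]
    set e := 2*c - a - b with he
    field_simp
    rw [he]
    ring
  · simp only [neg_sq, div_pow, mul_pow]
    rw [h1, h2, h3, hA, hB, hD, hd2]
    set e := 2*c - a - b with he
    field_simp
    rw [he]
    ring
  · rw [div_mul_div_comm, neg_mul, div_mul_div_comm, hab, had]
    field_simp
    ring
  · simp only [neg_sq, div_pow, mul_pow]
    rw [hC, h3, h2, hA, hB, hD, hd2]
    set e := 2*c - a - b with he
    field_simp
    rw [he]
    ring

lemma decomp (v : E2) : v = v 0 • vec2 1 0 + v 1 • vec2 0 1 := by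
  ext i
  fin_cases i <;> simp [vec2]

lemma irred2 (p q : ℝ) (hp : p ≠ 0) (hq : q ≠ 0) (R : E2 →ₗ[ℂ] E2) :
    IrreducibleFamily {rk1 (vec2 1 0), rk1 (vec2 (p:ℂ) (q:ℂ)), R} := by
  set e0 : E2 := vec2 1 0 with he0
  set e1 : E2 := vec2 0 1 with he1
  set uq : E2 := vec2 (p:ℂ) (q:ℂ) with huq
  have hpc : (p:ℂ) ≠ 0 := by exact_mod_cast hp
  have hqc : (q:ℂ) ≠ 0 := by exact_mod_cast hq
  intro W hW
  by_cases hbot : W = ⊥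
  · left; exact hbot
  right
  obtain ⟨z, hz, hz0⟩ := Submodule.exists_mem_ne_zero_of_ne_bot hbot
  have hWP : ∀ w ∈ W, rk1 e0 w ∈ W := fun w hw =>
    hW _ (Set.mem_insert _ _) (Submodule.mem_map_of_mem hw)
  have hWQ : ∀ w ∈ W, rk1 uq w ∈ W := fun w hw =>
    hW _ (Set.mem_insert_of_mem _ (Set.mem_insert _ _)) (Submodule.mem_map_of_mem hw)
  have hP_app : ∀ w : E2, rk1 e0 w = (w 0) • e0 := by
    intro w; rw [rk1_apply, he0, inner_vec2]; simp
  have hQ_app : ∀ w : E2, rk1 uq w = ((p:ℂ) * w 0 + (q:ℂ) * w 1) • uq := by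
    intro w; rw [rk1_apply, huq, inner_vec2]; simp [Complex.conj_ofReal]
  -- main claim: e0 ∈ W and e1 ∈ W
  have hkey : e0 ∈ W ∧ e1 ∈ W := by
    by_cases h0 : z 0 = 0
    · -- z is a nonzero multiple of e1
      have hz1 : z 1 ≠ 0 := by
        intro h1
        apply hz0
        ext i; fin_cases i
        · exact h0
        · exact h1
      have he1W : e1 ∈ W := by
        have hz' : (z 1)⁻¹ • z ∈ W := W.smul_mem _ hz
        have hze : (z 1)⁻¹ • z = e1 := by
          ext i; fin_cases i
          · simp [he1, vec2, h0]
          · simp [he1, vec2, inv_mul_cancel₀ hz1]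
        rwa [hze] at hz'
      have huqW : uq ∈ W := by
        have h1 := hWQ e1 he1W
        rw [hQ_app] at h1
        simp only [he1, vec2_zero, vec2_one, mul_zero, mul_one, zero_add] at h1
        have := W.smul_mem (q:ℂ)⁻¹ h1
        rwa [smul_smul, inv_mul_cancel₀ hqc, one_smul] at this
      have he0W : e0 ∈ W := by
        have h1 := hWP uq huqW
        rw [hP_app] at h1
        simp only [huq, vec2_zero] at h1
        have := W.smul_mem (p:ℂ)⁻¹ h1
        rwa [smul_smul, inv_mul_cancel₀ hpc, one_smul] at this
      exact ⟨he0W, he1W⟩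
    · have he0W : e0 ∈ W := by
        have h1 := hWP z hz
        rw [hP_app] at h1
        have := W.smul_mem (z 0)⁻¹ h1
        rwa [smul_smul, inv_mul_cancel₀ h0, one_smul] at this
      have huqW : uq ∈ W := by
        have h1 := hWQ e0 he0W
        rw [hQ_app] at h1
        simp only [he0, vec2_zero, vec2_one, mul_zero, mul_one, add_zero] at h1
        have := W.smul_mem (p:ℂ)⁻¹ h1
        rwa [smul_smul, inv_mul_cancel₀ hpc, one_smul] at this
      have he1W : e1 ∈ W := by
        have h1 : uq - (p:ℂ) • e0 ∈ W := W.sub_mem huqW (W.smul_mem _ he0W)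
        have h2 : e1 = (q:ℂ)⁻¹ • (uq - (p:ℂ) • e0) := by
          ext i; fin_cases i
          · simp [he0, he1, huq, vec2]
          · simp [he0, he1, huq, vec2, inv_mul_cancel₀ hqc]
        rw [h2]
        exact W.smul_mem _ h1
      exact ⟨he0W, he1W⟩
  rw [Submodule.eq_top_iff']
  intro v
  rw [decomp v]
  exact W.add_mem (W.smul_mem _ hkey.1) (W.smul_mem _ hkey.2)

end Unitarization221

open Unitarization221 in
/-- The weights with which the unique indecomposable representation of the primitive poset
`(2,2,1)` with dimension vector `(1,2;1,2;1;2)` can be unitarized (the second chain members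
`P₂`, `Q₂` have rank 2, i.e. `P₂ = Q₂ = I`): irreducible systems with
`α₁P₁ + α₂I + β₁Q₁ + β₂I + δR = γI` exist iff `α₁+α₂+β₂ < γ`, `α₂+β₁+β₂ < γ`,
`α₂+β₂+δ < γ`, `α₁+2α₂+β₁+2β₂+δ = 2γ`. -/
theorem unitarization_221_dim2 (α₁ α₂ β₁ β₂ δ γ : ℝ)
    (hα₁ : 0 < α₁) (hα₂ : 0 < α₂) (hβ₁ : 0 < β₁) (hβ₂ : 0 < β₂)
    (hδ : 0 < δ) (hγ : 0 < γ) :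
    (∃ P₁ Q₁ R : EuclideanSpace ℂ (Fin 2) →ₗ[ℂ] EuclideanSpace ℂ (Fin 2),
        IsOrthProj P₁ ∧ IsOrthProj Q₁ ∧ IsOrthProj R ∧
        Module.finrank ℂ (LinearMap.range P₁) = 1 ∧
        Module.finrank ℂ (LinearMap.range Q₁) = 1 ∧
        Module.finrank ℂ (LinearMap.range R) = 1 ∧
        IrreducibleFamily {P₁, Q₁, R} ∧
        (α₁ : ℂ) • P₁ + (α₂ : ℂ) • (LinearMap.id : EuclideanSpace ℂ (Fin 2) →ₗ[ℂ] _)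
            + (β₁ : ℂ) • Q₁ + (β₂ : ℂ) • (LinearMap.id : EuclideanSpace ℂ (Fin 2) →ₗ[ℂ] _)
            + (δ : ℂ) • R
          = (γ : ℂ) • (LinearMap.id : EuclideanSpace ℂ (Fin 2) →ₗ[ℂ] _)) ↔
      (α₁ + α₂ + β₂ < γ ∧ α₂ + β₁ + β₂ < γ ∧ α₂ + β₂ + δ < γ ∧
        α₁ + 2 * α₂ + β₁ + 2 * β₂ + δ = 2 * γ) := by
  constructor
  · rintro ⟨P₁, Q₁, R, hP, hQ, hR, rP, rQ, rR, hirr, heq⟩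
    -- trace identity
    have trid : LinearMap.trace ℂ E2 LinearMap.id = (2 : ℂ) := by
      rw [LinearMap.trace_id]
      norm_num [finrank_euclideanSpace_fin]
    have trproj : ∀ T : E2 →ₗ[ℂ] E2, IsOrthProj T →
        Module.finrank ℂ (LinearMap.range T) = 1 → LinearMap.trace ℂ E2 T = 1 := by
      intro T hT hr
      have hproj : LinearMap.IsProj (LinearMap.range T) T := by
        constructor
        · intro x; exact LinearMap.mem_range_self _ x
        · rintro x ⟨u, rfl⟩
          have := congrFun (congrArg DFunLike.coe hT.2) u
          simpa using this
      rw [hproj.trace, hr]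
      norm_num
    have htr := congrArg (LinearMap.trace ℂ E2) heq
    simp only [map_add, map_smul, trproj P₁ hP rP, trproj Q₁ hQ rQ, trproj R hR rR,
      trid, smul_eq_mul, mul_one] at htr
    have hsum : α₁ + 2 * α₂ + β₁ + 2 * β₂ + δ = 2 * γ := by
      have : ((α₁ + 2 * α₂ + β₁ + 2 * β₂ + δ : ℝ) : ℂ) = ((2 * γ : ℝ) : ℂ) := by
        push_cast
        linear_combination htr
      exact_mod_cast this
    -- reduced equation
    have hred : (α₁ : ℂ) • P₁ + (β₁ : ℂ) • Q₁ + (δ : ℂ) • R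
        = ((γ - α₂ - β₂ : ℝ) : ℂ) • (LinearMap.id : E2 →ₗ[ℂ] E2) := by
      rw [show ((γ - α₂ - β₂ : ℝ) : ℂ) = (γ : ℂ) - α₂ - β₂ by push_cast; ring,
        sub_smul, sub_smul, eq_sub_iff_add_eq, eq_sub_iff_add_eq, ← heq]
      module
    have hα : α₁ < γ - α₂ - β₂ :=
      key_lt P₁ Q₁ R hP hQ hR rP hirr α₁ β₁ δ (γ - α₂ - β₂) hβ₁ hδ hred
    have hβ : β₁ < γ - α₂ - β₂ := by
      have hirr' : IrreducibleFamily {Q₁, P₁, R} := by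
        rwa [Set.insert_comm]
      have hred' : (β₁ : ℂ) • Q₁ + (α₁ : ℂ) • P₁ + (δ : ℂ) • R
          = ((γ - α₂ - β₂ : ℝ) : ℂ) • (LinearMap.id : E2 →ₗ[ℂ] E2) := by
        rw [← hred]; module
      exact key_lt Q₁ P₁ R hQ hP hR rQ hirr' β₁ α₁ δ (γ - α₂ - β₂) hα₁ hδ hred'
    have hδ' : δ < γ - α₂ - β₂ := by
      have hset : ({R, P₁, Q₁} : Set (E2 →ₗ[ℂ] E2)) = {P₁, Q₁, R} := by
        ext x; simp only [Set.mem_insert_iff, Set.mem_singleton_iff]; tauto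
      have hirr' : IrreducibleFamily {R, P₁, Q₁} := by
        rwa [hset]
      have hred' : (δ : ℂ) • R + (α₁ : ℂ) • P₁ + (β₁ : ℂ) • Q₁
          = ((γ - α₂ - β₂ : ℝ) : ℂ) • (LinearMap.id : E2 →ₗ[ℂ] E2) := by
        rw [← hred]; module
      exact key_lt R P₁ Q₁ hR hP hQ rR hirr' δ α₁ β₁ (γ - α₂ - β₂) hα₁ hβ₁ hred'
    exact ⟨by linarith, by linarith, by linarith, hsum⟩
  · rintro ⟨h1, h2, h3, h4⟩
    obtain ⟨p, q, x, y, hp, hq, I1, I2, I3, I4, I5⟩ :=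
      exists_pqxy α₁ β₁ δ (γ - α₂ - β₂) hα₁ hβ₁ hδ (by linarith) (by linarith)
        (by linarith) (by linarith)
    have hself : ∀ u v : ℝ, u^2 + v^2 = 1 →
        ⟪vec2 (u:ℂ) (v:ℂ), vec2 (u:ℂ) (v:ℂ)⟫_ℂ = 1 := by
      intro u v huv
      rw [inner_vec2]
      simp only [vec2_zero, vec2_one, Complex.conj_ofReal]
      have : ((u^2 + v^2 : ℝ) : ℂ) = 1 := by rw [huv]; norm_num
      push_cast at this
      linear_combination this
    have hselfQ := hself p q I1
    have hselfR := hself x y I2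
    have hselfP : ⟪vec2 (1:ℂ) (0:ℂ), vec2 (1:ℂ) (0:ℂ)⟫_ℂ = 1 := by
      rw [inner_vec2]; simp
    refine ⟨rk1 (vec2 1 0), rk1 (vec2 (p:ℂ) (q:ℂ)), rk1 (vec2 (x:ℂ) (y:ℂ)),
      ⟨rk1_symm _, rk1_idem _ hselfP⟩, ⟨rk1_symm _, rk1_idem _ hselfQ⟩,
      ⟨rk1_symm _, rk1_idem _ hselfR⟩,
      rk1_finrank _ hselfP, rk1_finrank _ hselfQ, rk1_finrank _ hselfR,
      irred2 p q (ne_of_gt hp) (ne_of_gt hq) _, ?_⟩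
    -- the operator equation
    have C3 : (α₁ : ℂ) + (β₁ : ℂ) * (p:ℂ)^2 + (δ : ℂ) * (x:ℂ)^2 = (γ : ℂ) - α₂ - β₂ := by
      have : ((α₁ + β₁*p^2 + δ*x^2 : ℝ) : ℂ) = ((γ - α₂ - β₂ : ℝ) : ℂ) := by rw [I3]
      push_cast at this
      linear_combination this
    have C4 : (β₁ : ℂ) * ((p:ℂ) * (q:ℂ)) + (δ : ℂ) * ((x:ℂ) * (y:ℂ)) = 0 := by
      have : ((β₁*(p*q) + δ*(x*y) : ℝ) : ℂ) = 0 := by rw [I4]; norm_num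
      push_cast at this
      linear_combination this
    have C5 : (β₁ : ℂ) * (q:ℂ)^2 + (δ : ℂ) * (y:ℂ)^2 = (γ : ℂ) - α₂ - β₂ := by
      have : ((β₁*q^2 + δ*y^2 : ℝ) : ℂ) = ((γ - α₂ - β₂ : ℝ) : ℂ) := by rw [I5]
      push_cast at this
      linear_combination this
    apply LinearMap.ext
    intro v
    ext i
    fin_cases i <;>
      simp only [Fin.zero_eta, Fin.mk_one, Fin.isValue, LinearMap.add_apply,
        LinearMap.smul_apply, LinearMap.id_apply, rk1_apply, inner_vec2, vec2_zero, vec2_one,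
        Complex.conj_ofReal, map_one, map_zero, PiLp.add_apply, PiLp.smul_apply, smul_eq_mul]
    · linear_combination v 0 * C3 + v 1 * C4
    · linear_combination v 0 * C4 + v 1 * C5
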